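/- Let g be a compact simple Lie algebra, σ = τ_{(1/2)K_i} = Ad(exp(π/2)√−1K_i) with m_i = 3, and h := g^σ. Let Δ_h^+ := {α ∈ Δ^+(g_C,t_C) : A_α, B_α ∈ h}. Then Δ_h^+ = {α = Σ_{j=1}^{n} k_j α_j ∈ Δ^+(g_C,t_C) : k_i = 0}. -/
import Mathlib


/-!
Common framework: we model the complexification `gC` of a compact Lie algebra `g` as a
complex Lie algebra, the compact real form `g` and the maximal abelian subalgebra `t`
as real Lie subalgebras of `gC`, roots of `(gC, tC)` as complex-linear functionals on
`gC` (only their restriction to `tC`, the complex span of `t`, matters), and the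
inner automorphisms `Ad(exp X) = exp (ad X)` through an abstract family `expAd`
characterized by its action on eigenvectors of `ad X` (which determines it on the
compact form, where every `ad X` is semisimple).
-/

open Complex

namespace Paper

variable (gC : Type) [LieRing gC] [LieAlgebra ℂ gC] [LieAlgebra ℝ gC]
  [IsScalarTower ℝ ℂ gC] [FiniteDimensional ℂ gC]

/-- Composition group structure on the Lie algebra automorphisms of `gC`. -/
noncomputable instance : Group (gC ≃ₗ⁅ℂ⁆ gC) where
  mul f g := g.trans f
  one := LieEquiv.refl
  inv f := f.symm
  mul_assoc f g h := rfl
  one_mul f := rfl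
  mul_one f := rfl
  inv_mul_cancel f := by
    ext x
    exact f.symm_apply_apply x

/-- The complex span `t_ℂ` of a real subalgebra `t` of `gC`. -/
def cspan (t : LieSubalgebra ℝ gC) : Submodule ℂ gC := Submodule.span ℂ (t : Set gC)

/-- The root space of the functional `a` with respect to `t_ℂ`. -/
def rootSpace (t : LieSubalgebra ℝ gC) (a : Module.Dual ℂ gC) : Set gC :=
  {X : gC | ∀ H ∈ cspan gC t, ⁅H, X⁆ = a H • X}

/-- `a` is a root of `(gC, t_ℂ)`. -/
def IsRoot (t : LieSubalgebra ℝ gC) (a : Module.Dual ℂ gC) : Prop :=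
  (∃ H ∈ cspan gC t, a H ≠ 0) ∧ ∃ X : gC, X ≠ 0 ∧ X ∈ rootSpace gC t a

/-- `g` is a compact real form of `gC`: `gC = g ⊕ √-1 g` and the Killing form of `g`
is negative definite. -/
structure IsCompactForm (g : LieSubalgebra ℝ gC) : Prop where
  spans : ∀ z : gC, ∃ x ∈ g, ∃ y ∈ g, z = x + Complex.I • y
  inj : ∀ x : gC, x ∈ g → Complex.I • x ∈ g → x = 0
  negdef : ∀ x : ↥g, x ≠ 0 → killingForm ℝ ↥g x x < 0

/-- `t` is a maximal abelian subalgebra of `g`. -/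
structure IsMaxAbelian (g t : LieSubalgebra ℝ gC) : Prop where
  le : t ≤ g
  abelian : ∀ x ∈ t, ∀ y ∈ t, ⁅x, y⁆ = (0 : gC)
  max : ∀ t' : LieSubalgebra ℝ gC, t' ≤ g →
    (∀ x ∈ t', ∀ y ∈ t', ⁅x, y⁆ = (0 : gC)) → t ≤ t' → t' = t

/-- `α 1, …, α n` is a system of fundamental (simple) roots of `Δ(gC, t_ℂ)` and
`K 1, …, K n` is the dual basis of `t_ℂ`, i.e. `α i (K j) = δ_{ij}`. -/
structure IsSimpleSystem (t : LieSubalgebra ℝ gC) (n : ℕ) (α : ℕ → Module.Dual ℂ gC)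
    (K : ℕ → gC) : Prop where
  isRoot : ∀ i ∈ Finset.Icc 1 n, IsRoot gC t (α i)
  decomp : ∀ b : Module.Dual ℂ gC, IsRoot gC t b →
    (∃ k : ℕ → ℕ, ∀ H ∈ cspan gC t, b H = ∑ j ∈ Finset.Icc 1 n, (k j : ℂ) * α j H) ∨
    (∃ k : ℕ → ℕ, ∀ H ∈ cspan gC t, b H = -∑ j ∈ Finset.Icc 1 n, (k j : ℂ) * α j H)
  K_mem : ∀ j ∈ Finset.Icc 1 n, K j ∈ cspan gC t
  K_dual : ∀ i ∈ Finset.Icc 1 n, ∀ j ∈ Finset.Icc 1 n, α i (K j) = if i = j then 1 else 0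

/-- `δ = Σ m_j α_j` is the highest root of `Δ(gC, t_ℂ)`. -/
structure IsHighestRoot (t : LieSubalgebra ℝ gC) (n : ℕ) (α : ℕ → Module.Dual ℂ gC)
    (δ : Module.Dual ℂ gC) (m : ℕ → ℕ) : Prop where
  isRoot : IsRoot gC t δ
  decomp : ∀ H ∈ cspan gC t, δ H = ∑ j ∈ Finset.Icc 1 n, (m j : ℂ) * α j H
  highest : ∀ (b : Module.Dual ℂ gC) (k : ℕ → ℕ), IsRoot gC t b →
    (∀ H ∈ cspan gC t, b H = ∑ j ∈ Finset.Icc 1 n, (k j : ℂ) * α j H) →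
    ∀ j ∈ Finset.Icc 1 n, k j ≤ m j

/-- `expAd X` is the inner automorphism `Ad(exp X) = exp (ad X)` of `gC`:
it multiplies each eigenvector of `ad X` with eigenvalue `c` by `e^c`, it is additive on
commuting arguments, and conjugation by any automorphism transports it naturally. -/
structure IsExpAd (expAd : gC → (gC ≃ₗ⁅ℂ⁆ gC)) : Prop where
  eig : ∀ (X Y : gC) (c : ℂ), ⁅X, Y⁆ = c • Y → expAd X Y = Complex.exp c • Y
  add : ∀ X Y : gC, ⁅X, Y⁆ = 0 → expAd (X + Y) = expAd X * expAd Y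
  conj : ∀ (f : gC ≃ₗ⁅ℂ⁆ gC) (X : gC), f * expAd X * f⁻¹ = expAd (f X)

/-- The group `Int(s)` of inner automorphisms generated by `exp (ad X)`, `X ∈ s`. -/
noncomputable def Inn (expAd : gC → (gC ≃ₗ⁅ℂ⁆ gC)) (s : LieSubalgebra ℝ gC) :
    Subgroup (gC ≃ₗ⁅ℂ⁆ gC) :=
  Subgroup.closure (expAd '' (s : Set gC))

/-- The automorphism `τ_H = Ad(exp π √-1 H)`. -/
noncomputable def tau (expAd : gC → (gC ≃ₗ⁅ℂ⁆ gC)) (H : gC) : gC ≃ₗ⁅ℂ⁆ gC :=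
  expAd (((Real.pi : ℂ) * Complex.I) • H)

/-- The automorphism `Ad(exp (π/2) √-1 H)`. -/
noncomputable def sigmaAd (expAd : gC → (gC ≃ₗ⁅ℂ⁆ gC)) (H : gC) : gC ≃ₗ⁅ℂ⁆ gC :=
  expAd ((((Real.pi / 2 : ℝ) : ℂ) * Complex.I) • H)

/-- The fixed point set `g^f` of an automorphism `f` inside the real form `g`. -/
def FixIn (g : LieSubalgebra ℝ gC) (f : gC ≃ₗ⁅ℂ⁆ gC) : Set gC :=
  {x : gC | x ∈ g ∧ f x = x}

/-- Root space decomposition: `gC` is spanned by `t_ℂ` together with the root spaces. -/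
def SpansByRoots (t : LieSubalgebra ℝ gC) : Prop :=
  Submodule.span ℂ ((cspan gC t : Set gC) ∪
    {X : gC | ∃ a : Module.Dual ℂ gC, IsRoot gC t a ∧ X ∈ rootSpace gC t a}) = ⊤

/-- **Statement 14** (Lemma 6.1).  Let `g` be a compact simple Lie algebra,
`σ = Ad(exp (π/2) √-1 K i)` with `m i = 3`, and `h := g^σ`.  For a positive root `a` with
Weyl basis vectors `E a, E (-a)` put `A_a = E a - E (-a)` and
`B_a = √-1 (E a + E (-a))`.  Then `Δ_h⁺ := {a ∈ Δ⁺ ∣ A_a, B_a ∈ h}` consists exactly of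
the positive roots `a = Σ k_j α_j` with `k i = 0`. -/
theorem stmt_14
    (gC : Type) [LieRing gC] [LieAlgebra ℂ gC] [LieAlgebra ℝ gC]
    [IsScalarTower ℝ ℂ gC] [FiniteDimensional ℂ gC]
    [LieAlgebra.IsSimple ℂ gC]
    (g t : LieSubalgebra ℝ gC)
    (hg : IsCompactForm gC g) (ht : IsMaxAbelian gC g t)
    (expAd : gC → (gC ≃ₗ⁅ℂ⁆ gC)) (hexp : IsExpAd gC expAd)
    (hspan : SpansByRoots gC t)
    (n : ℕ) (α : ℕ → Module.Dual ℂ gC) (K : ℕ → gC)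
    (hsys : IsSimpleSystem gC t n α K)
    (δ : Module.Dual ℂ gC) (m : ℕ → ℕ) (hδ : IsHighestRoot gC t n α δ m)
    (i : ℕ) (hi : i ∈ Finset.Icc 1 n) (hmi : m i = 3)
    -- the positive roots and the Weyl basis
    (Δp : Finset (Module.Dual ℂ gC))
    (hroots : ∀ a ∈ Δp, IsRoot gC t a)
    (hposdec : ∀ a ∈ Δp, ∃ k : ℕ → ℕ,
      ∀ H ∈ cspan gC t, a H = ∑ j ∈ Finset.Icc 1 n, (k j : ℂ) * α j H)
    (E : Module.Dual ℂ gC → gC)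
    (hE : ∀ a ∈ Δp, E a ∈ rootSpace gC t a ∧ E a ≠ 0 ∧
      E (-a) ∈ rootSpace gC t (-a) ∧ E (-a) ≠ 0 ∧
      (E a - E (-a)) ∈ g ∧ Complex.I • (E a + E (-a)) ∈ g) :
    ∀ a ∈ Δp, ∀ k : ℕ → ℕ,
      (∀ H ∈ cspan gC t, a H = ∑ j ∈ Finset.Icc 1 n, (k j : ℂ) * α j H) →
      (((E a - E (-a)) ∈ FixIn gC g (sigmaAd gC expAd (K i)) ∧
        Complex.I • (E a + E (-a)) ∈ FixIn gC g (sigmaAd gC expAd (K i))) ↔ k i = 0) := by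
  intro a ha k hk
  obtain ⟨hEa, hEa0, hEma, hEma0, hAg, hBg⟩ := hE a ha
  have hKi : K i ∈ cspan gC t := hsys.K_mem i hi
  have haKi : a (K i) = (k i : ℂ) := by
    rw [hk (K i) hKi, Finset.sum_eq_single i]
    · rw [hsys.K_dual i hi i hi]; simp
    · intro j hj hji
      rw [hsys.K_dual j hj i hi, if_neg hji, mul_zero]
    · intro h; exact absurd hi h
  set s : ℂ := ((Real.pi / 2 : ℝ) : ℂ) * Complex.I with hs
  have hmemX : s • K i ∈ cspan gC t := Submodule.smul_mem _ _ hKi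
  have hbr1 : ⁅s • K i, E a⁆ = (s * (k i : ℂ)) • E a := by
    rw [hEa (s • K i) hmemX, map_smul, haKi, smul_eq_mul]
  have hbr2 : ⁅s • K i, E (-a)⁆ = (-(s * (k i : ℂ))) • E (-a) := by
    rw [hEma (s • K i) hmemX]
    simp only [LinearMap.neg_apply, map_smul, haKi, smul_eq_mul]
    ring_nf
  set σ := sigmaAd gC expAd (K i) with hσdef
  have hsig : σ = expAd (s • K i) := rfl
  have hσEa : σ (E a) = Complex.exp (s * (k i : ℂ)) • E a := by
    rw [hsig]; exact hexp.eig _ _ _ hbr1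
  have hσEma : σ (E (-a)) = Complex.exp (-(s * (k i : ℂ))) • E (-a) := by
    rw [hsig]; exact hexp.eig _ _ _ hbr2
  have hsubσ : σ (E a - E (-a)) = σ (E a) - σ (E (-a)) :=
    σ.toLinearEquiv.map_sub _ _
  have haddσ : σ (Complex.I • (E a + E (-a))) = Complex.I • (σ (E a) + σ (E (-a))) := by
    show σ.toLinearEquiv (Complex.I • (E a + E (-a))) =
      Complex.I • (σ.toLinearEquiv (E a) + σ.toLinearEquiv (E (-a)))
    rw [map_smul, map_add]
  constructor
  · rintro ⟨⟨-, hAfix⟩, ⟨-, hBfix⟩⟩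
    have hki3 : k i ≤ 3 := by
      have := hδ.highest a k (hroots a ha) hk i hi
      omega
    rw [hsubσ, hσEa, hσEma] at hAfix
    rw [haddσ, hσEa, hσEma] at hBfix
    have hBfix' : Complex.exp (s * (k i : ℂ)) • E a +
        Complex.exp (-(s * (k i : ℂ))) • E (-a) = E a + E (-a) :=
      smul_right_injective gC Complex.I_ne_zero hBfix
    have hsum : (2 * Complex.exp (s * (k i : ℂ))) • E a = (2 : ℂ) • E a := by
      have h : (Complex.exp (s * (k i : ℂ)) • E a -
            Complex.exp (-(s * (k i : ℂ))) • E (-a)) +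
          (Complex.exp (s * (k i : ℂ)) • E a +
            Complex.exp (-(s * (k i : ℂ))) • E (-a)) =
          (E a - E (-a)) + (E a + E (-a)) := by rw [hAfix, hBfix']
      linear_combination (norm := module) h
    have hexp1 : Complex.exp (s * (k i : ℂ)) = 1 := by
      have h0 : (2 * Complex.exp (s * (k i : ℂ)) - 2) • E a = 0 := by
        rw [sub_smul, hsum, sub_self]
      rcases smul_eq_zero.mp h0 with h | h
      · linear_combination h / 2
      · exact absurd h hEa0
    obtain ⟨z, hz⟩ := Complex.exp_eq_one_iff.mp hexp1
    have hreal : (Real.pi / 2) * (k i : ℝ) = (z : ℝ) * (2 * Real.pi) := by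
      have hz' : (((Real.pi / 2) * (k i : ℝ) : ℝ) : ℂ) * Complex.I =
          (((z : ℝ) * (2 * Real.pi) : ℝ) : ℂ) * Complex.I := by
        push_cast
        rw [hs] at hz
        push_cast at hz
        linear_combination hz
      have := mul_right_cancel₀ Complex.I_ne_zero hz'
      exact_mod_cast this
    have hpi : Real.pi > 0 := Real.pi_pos
    have hki4 : (k i : ℝ) = 4 * (z : ℝ) := by nlinarith [hpi, hreal]
    have hzint : (k i : ℤ) = 4 * z := by exact_mod_cast hki4
    omega
  · intro hki
    have h1 : Complex.exp (s * (k i : ℂ)) = 1 := by rw [hki]; simp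
    have h2 : Complex.exp (-(s * (k i : ℂ))) = 1 := by rw [hki]; simp
    refine ⟨⟨hAg, ?_⟩, ⟨hBg, ?_⟩⟩
    · rw [hsubσ, hσEa, hσEma, h1, h2, one_smul, one_smul]
    · rw [haddσ, hσEa, hσEma, h1, h2, one_smul, one_smul]

end Paper
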